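/- Let X be an n×p matrix, λ > 0, and β̂ a LASSO solution for data y = Xβ + ε. Let A_1 ⊇ {j : β̂_j ≠ 0} with Σ_{11} = X_{A_1}'X_{A_1}/n having smallest eigenvalue ≥ c_* > 0, and P_1 the projection onto the span of the columns in A_1. Then ‖X_{A_1}(β̂_{A_1} - β_{A_1})‖ ≤ ‖Xβ - X_{A_1}β_{A_1}‖ + ‖P_1 ε‖ + λ·sqrt(|A_1|/(c_* n)). -/

import Mathlib

open Finset Matrix


lemma cs_sqrt {ι : Type*} [Fintype ι] (a b : ι → ℝ) :
    ∑ i, a i * b i ≤ Real.sqrt (∑ i, a i ^ 2) * Real.sqrt (∑ i, b i ^ 2) := by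
  have h := Finset.sum_mul_sq_le_sq_mul_sq Finset.univ a b
  calc ∑ i, a i * b i ≤ |∑ i, a i * b i| := le_abs_self _
    _ = Real.sqrt ((∑ i, a i * b i) ^ 2) := (Real.sqrt_sq_eq_abs _).symm
    _ ≤ Real.sqrt ((∑ i, a i ^ 2) * ∑ i, b i ^ 2) := Real.sqrt_le_sqrt h
    _ = _ := Real.sqrt_mul (by positivity) _

lemma kkt_bound {n p : ℕ} (X : Matrix (Fin n) (Fin p) ℝ) (y : Fin n → ℝ)
    (lam : ℝ) (hlam : 0 < lam) (βhat : Fin p → ℝ)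
    (hmin : ∀ b : Fin p → ℝ,
      (∑ i, (y i - X.mulVec βhat i) ^ 2) / 2 + lam * ∑ j, |βhat j| ≤
        (∑ i, (y i - X.mulVec b i) ^ 2) / 2 + lam * ∑ j, |b j|)
    (j : Fin p) : |∑ i, X i j * (y i - X.mulVec βhat i)| ≤ lam := by
  set r : Fin n → ℝ := fun i => y i - X.mulVec βhat i with hr
  set g : ℝ := ∑ i, X i j * r i with hg
  set C : ℝ := ∑ i, (X i j) ^ 2 with hC
  have hC0 : 0 ≤ C := by positivity
  have key : ∀ t : ℝ, t * g ≤ t ^ 2 * C / 2 + lam * |t| := by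
    intro t
    have h := hmin (fun k => βhat k + if k = j then t else 0)
    have hb : ∀ i, X.mulVec (fun k => βhat k + if k = j then t else 0) i
        = X.mulVec βhat i + t * X i j := by
      intro i
      simp only [Matrix.mulVec, dotProduct, mul_add, Finset.sum_add_distrib, mul_ite,
        mul_zero, Finset.sum_ite_eq', Finset.mem_univ, if_true]
      ring
    have habs : (∑ k, |βhat k + if k = j then t else 0|)
        = (∑ k, |βhat k|) + (|βhat j + t| - |βhat j|) := by
      have h1 : ∀ k, |βhat k + if k = j then t else 0|
          = |βhat k| + (if k = j then |βhat j + t| - |βhat j| else 0) := by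
        intro k; by_cases hk : k = j <;> simp [hk]
      rw [Finset.sum_congr rfl fun k _ => h1 k, Finset.sum_add_distrib,
        Finset.sum_ite_eq' Finset.univ j]
      simp
    have hsq : ∑ i, (y i - (X.mulVec βhat i + t * X i j)) ^ 2
        = (∑ i, r i ^ 2) - 2 * t * g + t ^ 2 * C := by
      have h2 : ∀ i, (y i - (X.mulVec βhat i + t * X i j)) ^ 2
          = r i ^ 2 - 2 * t * (X i j * r i) + t ^ 2 * (X i j) ^ 2 := by
        intro i; simp only [hr]; ring
      rw [Finset.sum_congr rfl fun i _ => h2 i, Finset.sum_add_distrib,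
        Finset.sum_sub_distrib, ← Finset.mul_sum, ← Finset.mul_sum, hg, hC]
    simp only [hb, habs, hsq] at h
    have htri : |βhat j + t| - |βhat j| ≤ |t| := by
      have := abs_add_le (βhat j) t; linarith
    nlinarith [mul_le_mul_of_nonneg_left htri hlam.le]
  rw [abs_le]
  constructor
  · by_contra h'
    push_neg at h'
    have hs : 0 < (-lam - g) / (C + 1) := by
      apply div_pos <;> linarith
    have hk := key (-((-lam - g) / (C + 1)))
    rw [abs_neg, abs_of_pos hs] at hk
    set s := (-lam - g) / (C + 1) with hsdef
    have hsC : s * (C + 1) = -lam - g := div_mul_cancel₀ _ (by positivity)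
    nlinarith [sq_nonneg s, mul_pos hs hs]
  · by_contra h'
    push_neg at h'
    have hs : 0 < (g - lam) / (C + 1) := by
      apply div_pos <;> linarith
    have hk := key ((g - lam) / (C + 1))
    rw [abs_of_pos hs] at hk
    set s := (g - lam) / (C + 1) with hsdef
    have hsC : s * (C + 1) = g - lam := div_mul_cancel₀ _ (by positivity)
    nlinarith [sq_nonneg s, mul_pos hs hs]

lemma mulVec_dot {m k : Type*} [Fintype m] [Fintype k] (A : Matrix m k ℝ) (x : k → ℝ) (z : m → ℝ) :
    dotProduct (A.mulVec x) z = dotProduct x (Aᵀ.mulVec z) := by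
  rw [dotProduct_mulVec, Matrix.vecMul_transpose, dotProduct_comm]


/-- Inequality (3.3): for a LASSO solution β̂ with support in A₁ whose Gram
matrix has smallest eigenvalue ≥ c_* > 0,
‖X₁(β̂₁-β₁)‖ ≤ ‖Xβ - X₁β₁‖ + ‖P₁ε‖ + λ√(|A₁|/(c_* n)). -/
theorem lasso_prediction_bound_3_3 (n p : ℕ) (hn : 0 < n)
    (X : Matrix (Fin n) (Fin p) ℝ) (β : Fin p → ℝ) (ε : Fin n → ℝ)
    (lam cl : ℝ) (hlam : 0 < lam) (hcl : 0 < cl)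
    (βhat : Fin p → ℝ)
    (hmin : ∀ b : Fin p → ℝ,
      (∑ i, (X.mulVec β i + ε i - X.mulVec βhat i) ^ 2) / 2 + lam * ∑ j, |βhat j| ≤
        (∑ i, (X.mulVec β i + ε i - X.mulVec b i) ^ 2) / 2 + lam * ∑ j, |b j|)
    (A1 : Finset (Fin p)) (hsupp : ∀ j, βhat j ≠ 0 → j ∈ A1)
    (X1 : Matrix (Fin n) A1 ℝ) (hX1 : X1 = fun i (j : A1) => X i j)
    (heig : ∀ v : A1 → ℝ,
      cl * (∑ j, (v j) ^ 2) ≤ (∑ i, (X1.mulVec v i) ^ 2) / n)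
    (S11 : Matrix A1 A1 ℝ) (hS11 : S11 = (n : ℝ)⁻¹ • (X1ᵀ * X1))
    (P1 : Matrix (Fin n) (Fin n) ℝ) (hP1 : P1 = (n : ℝ)⁻¹ • (X1 * S11⁻¹ * X1ᵀ)) :
    Real.sqrt (∑ i, (X1.mulVec (fun j : A1 => βhat j - β j) i) ^ 2) ≤
      Real.sqrt (∑ i, (X.mulVec β i - X1.mulVec (fun j : A1 => β j) i) ^ 2)
        + Real.sqrt (∑ i, (P1.mulVec ε i) ^ 2)
        + lam * Real.sqrt ((A1.card : ℝ) / (cl * n)) := by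
  classical
  set δ : A1 → ℝ := fun j => βhat j - β j with hδ
  set v : Fin n → ℝ := X1.mulVec δ with hv
  set u : Fin n → ℝ := fun i => X.mulVec β i - X1.mulVec (fun j : A1 => β j) i with hu
  set r : Fin n → ℝ := fun i => X.mulVec β i + ε i - X.mulVec βhat i with hrdef
  -- β̂ is supported on A1
  have hXb : ∀ i, X.mulVec βhat i = X1.mulVec (fun j : A1 => βhat j) i := by
    intro i
    rw [hX1]
    simp only [Matrix.mulVec, dotProduct]
    rw [Finset.univ_eq_attach, Finset.sum_attach A1 (fun k => X i k * βhat k)]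
    refine (Finset.sum_subset (Finset.subset_univ _) ?_).symm
    intro x _ hx
    have hb0 : βhat x = 0 := by by_contra h; exact hx (hsupp x h)
    rw [hb0, mul_zero]
  -- residual decomposition r = u + ε - v
  have hri : ∀ i, r i = u i + ε i - v i := by
    intro i
    have hvlin : v i = X1.mulVec (fun j : A1 => βhat j) i - X1.mulVec (fun j : A1 => β j) i := by
      simp only [hv, hδ, Matrix.mulVec, dotProduct, mul_sub, Finset.sum_sub_distrib]
    simp only [hrdef, hu]
    rw [hvlin, hXb i]
    ring
  -- ⟨v, r⟩ equals the weighted gradient sum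
  have hvr : ∑ i, v i * r i = ∑ j : A1, δ j * (∑ i, X i j * r i) := by
    simp only [hv, Matrix.mulVec, dotProduct, Finset.sum_mul]
    rw [Finset.sum_comm]
    refine Finset.sum_congr rfl fun j _ => ?_
    rw [Finset.mul_sum]
    refine Finset.sum_congr rfl fun i _ => ?_
    rw [hX1]
    ring
  -- KKT bound
  have hg : ∀ k : Fin p, |∑ i, X i k * r i| ≤ lam := by
    intro k
    exact kkt_bound X (fun i => X.mulVec β i + ε i) lam hlam βhat (by simpa using hmin) k
  -- S11 is positive definite, hence invertible
  have hpd : S11.PosDef := by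
    rw [Matrix.posDef_iff_dotProduct_mulVec]
    constructor
    · rw [Matrix.IsHermitian]
      ext i k
      simp [hS11, Matrix.conjTranspose_apply, Matrix.mul_apply, Matrix.transpose_apply, mul_comm]
    · intro x hx
      have hdot : dotProduct (star x) (S11.mulVec x) = (n : ℝ)⁻¹ * ∑ i, (X1.mulVec x i) ^ 2 := by
        rw [hS11, Matrix.smul_mulVec, dotProduct_smul, ← Matrix.mulVec_mulVec,
          star_trivial, dotProduct_mulVec, Matrix.vecMul_transpose]
        simp [dotProduct, sq, smul_eq_mul]
      rw [hdot]
      have hx2 : 0 < ∑ j, (x j) ^ 2 := by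
        obtain ⟨j, hj⟩ : ∃ j, x j ≠ 0 := by
          by_contra h; push_neg at h; exact hx (funext h)
        apply Finset.sum_pos' (fun k _ => sq_nonneg _) ⟨j, Finset.mem_univ j, by positivity⟩
      have h1 := heig x
      have h2 : 0 < cl * ∑ j, (x j) ^ 2 := by positivity
      have hn' : (0 : ℝ) < n := by exact_mod_cast hn
      rw [inv_mul_eq_div]
      linarith
  have hdet : IsUnit S11.det := isUnit_iff_ne_zero.mpr hpd.det_pos.ne'
  have hSS : S11 * S11⁻¹ = 1 := Matrix.mul_nonsing_inv _ hdet
  -- X1ᵀ P1 = X1ᵀ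
  have hX1P : X1ᵀ * P1 = X1ᵀ := by
    rw [hP1, Matrix.mul_smul, show X1ᵀ * (X1 * S11⁻¹ * X1ᵀ) = X1ᵀ * X1 * (S11⁻¹ * X1ᵀ) by
      simp only [Matrix.mul_assoc], ← Matrix.smul_mul, ← hS11, ← Matrix.mul_assoc,
      hSS, Matrix.one_mul]
  -- ⟨v, P1 ε⟩ = ⟨v, ε⟩
  have hproj : ∑ i, v i * P1.mulVec ε i = ∑ i, v i * ε i := by
    have h1 : ∑ i, v i * P1.mulVec ε i = dotProduct v (P1.mulVec ε) := rfl
    have h2 : ∑ i, v i * ε i = dotProduct v ε := rfl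
    rw [h1, h2, hv, mulVec_dot, mulVec_dot, Matrix.mulVec_mulVec, hX1P]
  -- key identity
  have e1 : ∑ i, v i * r i = ∑ i, v i * u i + ∑ i, v i * ε i - ∑ i, v i ^ 2 := by
    rw [← Finset.sum_add_distrib, ← Finset.sum_sub_distrib]
    refine Finset.sum_congr rfl fun i _ => ?_
    rw [hri i]; ring
  have key : ∑ i, v i ^ 2
      = ∑ i, v i * u i + ∑ i, v i * P1.mulVec ε i - ∑ j : A1, δ j * (∑ i, X i j * r i) := by
    rw [hproj, ← hvr]; linarith [e1]
  -- bounds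
  set Nv := Real.sqrt (∑ i, v i ^ 2) with hNv
  set Nu := Real.sqrt (∑ i, u i ^ 2) with hNu
  set Ne := Real.sqrt (∑ i, (P1.mulVec ε i) ^ 2) with hNe
  have b1 : ∑ i, v i * u i ≤ Nv * Nu := cs_sqrt v u
  have b2 : ∑ i, v i * P1.mulVec ε i ≤ Nv * Ne := cs_sqrt v _
  have b3 : -∑ j : A1, δ j * (∑ i, X i j * r i) ≤ lam * ∑ j : A1, |δ j| := by
    rw [← Finset.sum_neg_distrib, Finset.mul_sum]
    refine Finset.sum_le_sum fun j _ => ?_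
    calc -(δ j * ∑ i, X i j * r i) ≤ |δ j * ∑ i, X i (j:Fin p) * r i| := neg_le_abs _
      _ = |δ j| * |∑ i, X i (j:Fin p) * r i| := abs_mul _ _
      _ ≤ |δ j| * lam := mul_le_mul_of_nonneg_left (hg j) (abs_nonneg _)
      _ = lam * |δ j| := mul_comm _ _
  have b4 : ∑ j : A1, |δ j| ≤ Real.sqrt (A1.card : ℝ) * Real.sqrt (∑ j : A1, δ j ^ 2) := by
    have h := cs_sqrt (fun _ : A1 => (1 : ℝ)) (fun j => |δ j|)
    simp only [one_mul, one_pow, sq_abs] at h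
    rwa [Finset.sum_const, Finset.card_univ, Fintype.card_coe, nsmul_eq_mul, mul_one] at h
  have b5 : ∑ j : A1, δ j ^ 2 ≤ (∑ i, v i ^ 2) / (cl * n) := by
    have h1 := heig δ
    have hn' : (0 : ℝ) < n := by exact_mod_cast hn
    rw [le_div_iff₀ (by positivity)]
    calc (∑ j : A1, δ j ^ 2) * (cl * n) = (cl * ∑ j : A1, δ j ^ 2) * n := by ring
      _ ≤ ((∑ i, (X1.mulVec δ i) ^ 2) / n) * n := by
          exact mul_le_mul_of_nonneg_right h1 hn'.le
      _ = ∑ i, v i ^ 2 := by rw [hv]; field_simp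
  have b6 : lam * ∑ j : A1, |δ j| ≤ lam * Real.sqrt ((A1.card : ℝ) / (cl * n)) * Nv := by
    have hn' : (0 : ℝ) < n := by exact_mod_cast hn
    have h1 : Real.sqrt (∑ j : A1, δ j ^ 2) ≤ Real.sqrt ((∑ i, v i ^ 2) / (cl * n)) :=
      Real.sqrt_le_sqrt b5
    have h2 : Real.sqrt ((∑ i, v i ^ 2) / (cl * n)) = Nv * Real.sqrt (1 / (cl * n)) := by
      rw [hNv, ← Real.sqrt_mul (by positivity)]
      ring_nf
    have h3 : Real.sqrt (A1.card : ℝ) * Real.sqrt (1 / (cl * n))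
        = Real.sqrt ((A1.card : ℝ) / (cl * n)) := by
      rw [← Real.sqrt_mul (Nat.cast_nonneg _)]
      ring_nf
    calc lam * ∑ j : A1, |δ j|
        ≤ lam * (Real.sqrt (A1.card : ℝ) * Real.sqrt (∑ j : A1, δ j ^ 2)) := by
          exact mul_le_mul_of_nonneg_left b4 hlam.le
      _ ≤ lam * (Real.sqrt (A1.card : ℝ) * (Nv * Real.sqrt (1 / (cl * n)))) := by
          refine mul_le_mul_of_nonneg_left ?_ hlam.le
          refine mul_le_mul_of_nonneg_left ?_ (Real.sqrt_nonneg _)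
          rw [← h2]; exact h1
      _ = lam * (Real.sqrt (A1.card : ℝ) * Real.sqrt (1 / (cl * n))) * Nv := by ring
      _ = lam * Real.sqrt ((A1.card : ℝ) / (cl * n)) * Nv := by rw [h3]
  -- assemble
  have main : Nv * Nv ≤ (Nu + Ne + lam * Real.sqrt ((A1.card : ℝ) / (cl * n))) * Nv := by
    have hsq : Nv * Nv = ∑ i, v i ^ 2 := by
      rw [hNv]; exact Real.mul_self_sqrt (Finset.sum_nonneg fun i _ => sq_nonneg _)
    rw [hsq, key]
    have hexp : (Nu + Ne + lam * Real.sqrt ((A1.card : ℝ) / (cl * n))) * Nv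
        = Nv * Nu + Nv * Ne + lam * Real.sqrt ((A1.card : ℝ) / (cl * n)) * Nv := by ring
    rw [hexp]
    linarith [b1, b2, b3, b6]
  have hNv0 : 0 ≤ Nv := Real.sqrt_nonneg _
  rcases eq_or_lt_of_le hNv0 with h0 | h0
  · rw [← h0]
    have : (0:ℝ) ≤ Nu + Ne + lam * Real.sqrt ((A1.card : ℝ) / (cl * n)) :=
      add_nonneg (add_nonneg (Real.sqrt_nonneg _) (Real.sqrt_nonneg _)) (mul_nonneg hlam.le (Real.sqrt_nonneg _))
    linarith
  · exact le_of_mul_le_mul_right main h0
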